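/- Let q be an odd prime power with q ≡ 1 (mod 4). In the Paley graph P(q), every k-subset of vertices with k = (q+3)/2 is an identifying set. -/

import Mathlib

open Set

variable {V : Type*}

/-- The closed neighbourhood `N[x]` of a vertex. -/
def closedNbhd (G : SimpleGraph V) (x : V) : Set V :=
  insert x (G.neighborSet x)

/-- `C` is an identifying set: all sets `N[x] ∩ C` are nonempty and pairwise distinct. -/
def IsIdentifying (G : SimpleGraph V) (C : Set V) : Prop :=
  (∀ x : V, (closedNbhd G x ∩ C).Nonempty) ∧
    ∀ x y : V, closedNbhd G x ∩ C = closedNbhd G y ∩ C → x = y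

/-- Every `k`-subset of vertices is an identifying set. -/
def EveryKIdentifying (G : SimpleGraph V) (k : ℕ) : Prop :=
  ∀ C : Set V, C.ncard = k → IsIdentifying G C

section Aux

variable {F : Type*} [Field F] [Fintype F] [DecidableEq F]

/-- counting lemma: if `f` takes values `±1` on `s`, then
`2 * #{w ∈ s | f w = 1} = #s + ∑ f`. -/
lemma aux_two_mul_card_filter (s : Finset F) (f : F → ℤ)
    (h : ∀ w ∈ s, f w = 1 ∨ f w = -1) :
    (2 : ℤ) * (s.filter (fun w => f w = 1)).card = s.card + ∑ w ∈ s, f w := by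
  classical
  rw [← Finset.sum_filter_add_sum_filter_not s (fun w => f w = 1) f]
  have h1 : ∑ w ∈ s.filter (fun w => f w = 1), f w
      = ((s.filter (fun w => f w = 1)).card : ℤ) := by
    rw [Finset.sum_congr rfl (fun w hw => (Finset.mem_filter.mp hw).2)]; simp
  have h2 : ∑ w ∈ s.filter (fun w => ¬ f w = 1), f w
      = -((s.filter (fun w => ¬ f w = 1)).card : ℤ) := by
    have h' : ∀ w ∈ s.filter (fun w => ¬ f w = 1), f w = -1 := by
      intro w hw
      rcases h w (Finset.mem_filter.mp hw).1 with h' | h'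
      · exact absurd h' (Finset.mem_filter.mp hw).2
      · exact h'
    rw [Finset.sum_congr rfl h']; simp
  have h3 : (s.filter (fun w => f w = 1)).card + (s.filter (fun w => ¬ f w = 1)).card
      = s.card := Finset.card_filter_add_card_filter_not _
  rw [h1, h2, ← h3]
  push_cast
  ring

lemma aux_two_mul_card_filter_neg (s : Finset F) (f : F → ℤ)
    (h : ∀ w ∈ s, f w = 1 ∨ f w = -1) :
    (2 : ℤ) * (s.filter (fun w => f w = -1)).card = s.card - ∑ w ∈ s, f w := by
  classical
  have key := aux_two_mul_card_filter s (fun w => -f w) (by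
    intro w hw; rcases h w hw with h' | h' <;> simp [h'])
  have hfe : s.filter (fun w => -f w = 1) = s.filter (fun w => f w = -1) := by
    apply Finset.filter_congr; intro w _; constructor <;> intro h' <;> linarith
  rw [hfe, Finset.sum_neg_distrib] at key
  linarith

/-- The key character sum: `∑ w, χ(w (w - a)) = -1` for `a ≠ 0`. -/
lemma aux_sum_quadChar (hF : ringChar F ≠ 2) (a : F) (ha : a ≠ 0) :
    ∑ w : F, (quadraticChar F (w * (w - a)) : ℤ) = -1 := by
  classical
  have step1 : ∑ w : F, (quadraticChar F (w * (w - a)) : ℤ)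
      = ∑ w ∈ Finset.univ.erase (0 : F), (quadraticChar F (w * (w - a)) : ℤ) := by
    rw [← Finset.add_sum_erase _ _ (Finset.mem_univ (0 : F))]
    simp
  have step2 : ∑ w ∈ Finset.univ.erase (0 : F), (quadraticChar F (w * (w - a)) : ℤ)
      = ∑ w ∈ Finset.univ.erase (0 : F), (quadraticChar F (1 - a * w⁻¹) : ℤ) := by
    apply Finset.sum_congr rfl
    intro w hw
    have hw0 : w ≠ 0 := Finset.ne_of_mem_erase hw
    have : w * (w - a) = w ^ 2 * (1 - a * w⁻¹) := by field_simp
    rw [this, map_mul, quadraticChar_sq_one' hw0, one_mul]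
  have step3 : ∑ w ∈ Finset.univ.erase (0 : F), (quadraticChar F (1 - a * w⁻¹) : ℤ)
      = ∑ u ∈ Finset.univ.erase (1 : F), (quadraticChar F u : ℤ) := by
    apply Finset.sum_bij' (fun w _ => 1 - a * w⁻¹) (fun u _ => a * (1 - u)⁻¹)
    · intro w hw
      have hw0 : w ≠ 0 := Finset.ne_of_mem_erase hw
      have : a * w⁻¹ ≠ 0 := mul_ne_zero ha (inv_ne_zero hw0)
      simp only [Finset.mem_erase, Finset.mem_univ, and_true]
      intro h'
      apply this
      linear_combination -h'
    · intro u hu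
      have hu1 : u ≠ 1 := Finset.ne_of_mem_erase hu
      have h1u : (1 : F) - u ≠ 0 := sub_ne_zero.mpr (Ne.symm hu1)
      simp only [Finset.mem_erase, Finset.mem_univ, and_true]
      exact mul_ne_zero ha (inv_ne_zero h1u)
    · intro w hw
      have hw0 : w ≠ 0 := Finset.ne_of_mem_erase hw
      field_simp
      rw [sub_sub_cancel, div_self ha]
    · intro u hu
      have hu1 : u ≠ 1 := Finset.ne_of_mem_erase hu
      have h1u : (1 : F) - u ≠ 0 := sub_ne_zero.mpr (Ne.symm hu1)
      field_simp
      ring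
    · intro w hw
      rfl
  have step4 : ∑ u ∈ Finset.univ.erase (1 : F), (quadraticChar F u : ℤ) = -1 := by
    have := quadraticChar_sum_zero hF
    rw [Finset.sum_erase_eq_sub (Finset.mem_univ (1 : F))]
    rw [this]
    simp
  rw [step1, step2, step3, step4]

end Aux

theorem stmt13 (F : Type*) [Field F] [Fintype F] (h4 : Fintype.card F % 4 = 1) :
    EveryKIdentifying
      (SimpleGraph.fromRel fun x y : F => ∃ z : F, z ≠ 0 ∧ x - y = z ^ 2)
      ((Fintype.card F + 3) / 2) := by
  classical
  set q := Fintype.card F with hq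
  set G := SimpleGraph.fromRel fun x y : F => ∃ z : F, z ≠ 0 ∧ x - y = z ^ 2 with hG
  set χ := quadraticChar F with hχ
  have hq2 : 2 ≤ q := Fintype.one_lt_card
  have hq5 : 5 ≤ q := by omega
  have hchar : ringChar F ≠ 2 := by
    intro h
    have := FiniteField.even_card_of_char_two h
    omega
  have hm1 : χ (-1) = 1 := by
    rw [hχ, quadraticChar_one_iff_isSquare (by norm_num : (-1 : F) ≠ 0)]
    rw [FiniteField.isSquare_neg_one_iff]
    omega
  have hsym : ∀ u : F, χ (-u) = χ u := by
    intro u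
    rw [← neg_one_mul, map_mul, hm1, one_mul]
  -- characterization of closed neighbourhoods
  have hmem : ∀ x z : F, z ∈ closedNbhd G x ↔ (z = x ∨ χ (z - x) = 1) := by
    intro x z
    constructor
    · rintro (rfl | hadj)
      · exact Or.inl rfl
      · right
        rw [SimpleGraph.mem_neighborSet, hG, SimpleGraph.fromRel_adj] at hadj
        obtain ⟨hne, h' | h'⟩ := hadj
        · obtain ⟨w, hw0, hw⟩ := h'
          have : z - x = -(w ^ 2) := by rw [← hw]; ring
          rw [this, hsym, hχ, quadraticChar_sq_one' hw0]
        · obtain ⟨w, hw0, hw⟩ := h'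
          rw [hw, hχ, quadraticChar_sq_one' hw0]
    · rintro (rfl | hsq)
      · exact Set.mem_insert _ _
      · have hzx : z - x ≠ 0 := by
          intro h
          rw [h] at hsq
          simp [hχ] at hsq
        have hne : z ≠ x := fun h => hzx (by rw [h, sub_self])
        apply Set.mem_insert_of_mem
        rw [SimpleGraph.mem_neighborSet, hG, SimpleGraph.fromRel_adj]
        refine ⟨Ne.symm hne, Or.inr ?_⟩
        rw [hχ, quadraticChar_one_iff_isSquare hzx] at hsq
        obtain ⟨w, hw⟩ := hsq
        have hw0 : w ≠ 0 := by
          intro h; rw [h] at hw; simp at hw; exact hzx hw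
        exact ⟨w, hw0, by rw [hw]; ring⟩
  intro C hC
  constructor
  · -- nonemptiness
    intro x
    by_contra hempty
    rw [Set.not_nonempty_iff_eq_empty] at hempty
    -- then C ⊆ {z | χ (z - x) = -1}
    set B : Finset F := Finset.univ.filter (fun z => (χ (z - x) : ℤ) = -1) with hB
    have hsub : C ⊆ (B : Set F) := by
      intro z hz
      have hzn : z ∉ closedNbhd G x := by
        intro h
        exact absurd (Set.mem_inter h hz) (by rw [hempty]; exact Set.notMem_empty z)
      rw [hmem] at hzn
      push_neg at hzn
      obtain ⟨hzx, hz1⟩ := hzn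
      have hzx0 : z - x ≠ 0 := sub_ne_zero.mpr hzx
      rcases quadraticChar_dichotomy hzx0 with h' | h'
      · exact absurd h' hz1
      · simp only [hB, Finset.coe_filter, Set.mem_setOf_eq, Finset.mem_univ, true_and]
        exact h'
    -- count B
    have hBcard : (2 : ℤ) * B.card = q - 1 := by
      have hBe : B = (Finset.univ.erase x).filter (fun z => ((χ (z - x) : ℤ)) = -1) := by
        ext z
        simp only [hB, Finset.mem_filter, Finset.mem_erase, Finset.mem_univ, true_and, and_true]
        constructor
        · intro h'
          refine ⟨?_, h'⟩
          intro h
          rw [h] at h'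
          simp [hχ] at h'
        · exact fun h => h.2
      have hsum : ∑ z ∈ Finset.univ.erase x, ((χ (z - x) : ℤ)) = 0 := by
        rw [Finset.sum_erase_eq_sub (Finset.mem_univ x)]
        have : ∑ z : F, ((χ (z - x) : ℤ)) = ∑ u : F, ((χ u : ℤ)) := by
          apply Finset.sum_equiv (Equiv.subRight x) (by simp) (by simp)
        rw [this, hχ, quadraticChar_sum_zero hchar]
        simp
      have key := aux_two_mul_card_filter_neg (Finset.univ.erase x)
        (fun z => ((χ (z - x) : ℤ)))
        (by
          intro w hw
          have hw0 : w - x ≠ 0 := sub_ne_zero.mpr (Finset.ne_of_mem_erase hw)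
          exact_mod_cast quadraticChar_dichotomy hw0)
      rw [hsum, sub_zero] at key
      have key2 : (2 : ℤ) * ((Finset.univ.erase x).filter (fun z => (χ (z - x) : ℤ) = -1)).card
          = ((Finset.univ.erase x).card : ℤ) := key
      rw [hBe, key2, Finset.card_erase_of_mem (Finset.mem_univ x), Finset.card_univ, ← hq]
      omega
    have hle : C.ncard ≤ B.card := by
      have := Set.ncard_le_ncard hsub (Set.toFinite _)
      rwa [Set.ncard_coe_finset] at this
    have hBn : 2 * B.card = q - 1 := by
      have : (2 * B.card : ℤ) = ((q - 1 : ℕ) : ℤ) := by push_cast; omega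
      exact_mod_cast this
    omega
  · -- distinctness
    intro x y hxy
    by_contra hne
    set a := y - x with ha
    have ha0 : a ≠ 0 := sub_ne_zero.mpr (Ne.symm hne)
    set s : Finset F := (Finset.univ.erase x).erase y with hs
    set A : Finset F := s.filter (fun z => ((χ ((z - x) * (z - y)) : ℤ)) = 1) with hA
    have hsub : C ⊆ ({x, y} : Set F) ∪ (A : Set F) := by
      intro z hz
      by_cases hzx : z = x
      · exact Or.inl (Or.inl hzx)
      by_cases hzy : z = y
      · exact Or.inl (Or.inr hzy)
      right
      have hiff : z ∈ closedNbhd G x ↔ z ∈ closedNbhd G y := by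
        constructor
        · intro h
          have : z ∈ closedNbhd G x ∩ C := ⟨h, hz⟩
          rw [hxy] at this
          exact this.1
        · intro h
          have : z ∈ closedNbhd G y ∩ C := ⟨h, hz⟩
          rw [← hxy] at this
          exact this.1
      rw [hmem, hmem] at hiff
      simp only [hzx, hzy, false_or] at hiff
      have hzx0 : z - x ≠ 0 := sub_ne_zero.mpr hzx
      have hzy0 : z - y ≠ 0 := sub_ne_zero.mpr hzy
      have hmul : χ ((z - x) * (z - y)) = 1 := by
        rw [map_mul]
        rcases quadraticChar_dichotomy hzx0 with h1 | h1
        · rw [hχ] at *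
          rw [h1, hiff.mp h1]
          norm_num
        · have h2 : χ (z - y) = -1 := by
            rcases quadraticChar_dichotomy hzy0 with h2 | h2
            · exact absurd (hiff.mpr h2) (by rw [hχ] at *; rw [h1]; norm_num)
            · exact h2
          rw [hχ] at *
          rw [h1, h2]
          norm_num
      simp only [hA, Finset.coe_filter, Set.mem_setOf_eq]
      refine ⟨?_, by exact_mod_cast hmul⟩
      simp [hs, hzx, hzy]
    -- count A
    have hsum : ∑ z ∈ s, ((χ ((z - x) * (z - y)) : ℤ)) = -1 := by
      have hfull : ∑ z : F, ((χ ((z - x) * (z - y)) : ℤ)) = -1 := by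
        have : ∑ z : F, ((χ ((z - x) * (z - y)) : ℤ)) = ∑ w : F, ((χ (w * (w - a)) : ℤ)) := by
          apply Finset.sum_equiv (Equiv.subRight x) (by simp)
          intro z _
          simp only [Equiv.subRight_apply]
          congr 2
          ring
        rw [this, hχ]
        exact aux_sum_quadChar hchar a ha0
      rw [hs, Finset.sum_erase_eq_sub (by simp [Ne.symm hne] : y ∈ Finset.univ.erase x),
        Finset.sum_erase_eq_sub (Finset.mem_univ x), hfull]
      simp [hχ]
    have hscard : s.card = q - 2 := by
      rw [hs, Finset.card_erase_of_mem (by simp [Ne.symm hne]),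
        Finset.card_erase_of_mem (Finset.mem_univ x), Finset.card_univ, ← hq]
      omega
    have hAcard : (2 : ℤ) * A.card = (s.card : ℤ) - 1 := by
      have key := aux_two_mul_card_filter s (fun z => ((χ ((z - x) * (z - y)) : ℤ)))
        (by
          intro w hw
          have hw1 : w ≠ y := Finset.ne_of_mem_erase hw
          have hw2 : w ≠ x := Finset.ne_of_mem_erase (Finset.mem_of_mem_erase hw)
          have : (w - x) * (w - y) ≠ 0 :=
            mul_ne_zero (sub_ne_zero.mpr hw2) (sub_ne_zero.mpr hw1)
          exact_mod_cast quadraticChar_dichotomy this)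
      rw [hsum] at key
      rw [← hA] at key
      linarith
    have hAn : 2 * A.card = q - 3 := by
      have : (2 * A.card : ℤ) = ((q - 3 : ℕ) : ℤ) := by
        rw [hAcard, hscard]
        push_cast
        omega
      exact_mod_cast this
    have hle : C.ncard ≤ 2 + A.card := by
      calc C.ncard ≤ (({x, y} : Set F) ∪ (A : Set F)).ncard :=
            Set.ncard_le_ncard hsub (Set.toFinite _)
        _ ≤ ({x, y} : Set F).ncard + (A : Set F).ncard := Set.ncard_union_le _ _
        _ ≤ 2 + A.card := by
            rw [Set.ncard_coe_finset]
            exact add_le_add_left (le_trans (Set.ncard_insert_le x ({y} : Set F)) (by simp : ({y} : Set F).ncard + 1 ≤ 2)) _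
    omega
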